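/- Let G be a finite graph, K a subset of vertices connected to its boundary ∂K, and g : ∂K → ℝ. Then there exists a unique function u : K ∪ ∂K → ℝ with u = g on ∂K and Δ∞u(x) = 0 for all x ∈ K; moreover min_{∂K} g ≤ u ≤ max_{∂K} g on K. -/

import Mathlib

open Filter Topology
open scoped Classical

noncomputable section

variable {V : Type*}

/-- A path from `x` to `y` whose interior vertices `l` all lie in `K`. -/
def pathIn (adj : V → V → Prop) (K : Set V) (x y : V) (l : List V) : Prop :=
  List.Chain adj x (l ++ [y]) ∧ ∀ z ∈ l, z ∈ K

/-- The restricted path metric `d_K` (edge length `δ`), via paths with interior in `K`. -/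
def dK (adj : V → V → Prop) (K : Set V) (δ : ℝ) (x y : V) : ℝ :=
  if x = y then 0
  else sInf {r : ℝ | ∃ l : List V, pathIn adj K x y l ∧ r = δ * (l.length + 1)}

/-- The boundary of a vertex set `K`. -/
def bdry (adj : V → V → Prop) (K : Set V) : Set V :=
  {y | y ∉ K ∧ ∃ x ∈ K, adj x y}

/-- The graph infinity Laplacian. -/
def lapInf (adj : V → V → Prop) (u : V → ℝ) (x : V) : ℝ :=
  sSup ((fun y => u y - u x) '' {y | adj x y}) +
    sInf ((fun y => u y - u x) '' {y | adj x y})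

/-- The local Lipschitz constant `F(u,x)` at a vertex `x`. -/
def locLip (adj : V → V → Prop) (δ : ℝ) (u : V → ℝ) (x : V) : ℝ :=
  sSup ((fun y => |u x - u y| / δ) '' {y | adj x y})

/-- The Lipschitz constant of `u` over the set `A`, measured in the metric `d_K`. -/
def LipOn (adj : V → V → Prop) (K A : Set V) (δ : ℝ) (u : V → ℝ) : ℝ :=
  sSup {r : ℝ | ∃ x ∈ A, ∃ y ∈ A, x ≠ y ∧ r = |u x - u y| / dK adj K δ x y}

/-- `K` is connected: any two points of `K ∪ ∂K` are joined by a path through `K`. -/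
def connectedIn (adj : V → V → Prop) (K : Set V) : Prop :=
  ∀ x ∈ K ∪ bdry adj K, ∀ y ∈ K ∪ bdry adj K, x ≠ y → ∃ l, pathIn adj K x y l

/-! ### Auxiliary lemmas -/

lemma my_csSup_image_sub {s : Set V} (hfin : s.Finite) (hne : s.Nonempty) (f : V → ℝ) (c : ℝ) :
    sSup ((fun y => f y - c) '' s) = sSup (f '' s) - c := by
  apply le_antisymm
  · refine csSup_le (hne.image _) ?_
    rintro b ⟨y, hy, rfl⟩
    show f y - c ≤ _
    have := le_csSup (hfin.image f).bddAbove (⟨y, hy, rfl⟩ : f y ∈ f '' s)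
    linarith
  · rw [sub_le_iff_le_add]
    refine csSup_le (hne.image f) ?_
    rintro b ⟨y, hy, rfl⟩
    have := le_csSup (hfin.image (fun y => f y - c)).bddAbove
      (⟨y, hy, rfl⟩ : f y - c ∈ (fun y => f y - c) '' s)
    linarith

lemma my_csInf_image_sub {s : Set V} (hfin : s.Finite) (hne : s.Nonempty) (f : V → ℝ) (c : ℝ) :
    sInf ((fun y => f y - c) '' s) = sInf (f '' s) - c := by
  apply le_antisymm
  · obtain ⟨y, hy, hfy⟩ := (hne.image f).csInf_mem (hfin.image f)
    calc sInf ((fun y => f y - c) '' s) ≤ f y - c :=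
          csInf_le (hfin.image _).bddBelow ⟨y, hy, rfl⟩
      _ = sInf (f '' s) - c := by rw [hfy]
  · refine le_csInf (hne.image _) ?_
    rintro b ⟨y, hy, rfl⟩
    show _ ≤ f y - c
    have := csInf_le (hfin.image f).bddBelow (⟨y, hy, rfl⟩ : f y ∈ f '' s)
    linarith

/-- Every vertex of `K` has a neighbour (from connectedness and nonempty boundary). -/
lemma nbr_nonempty {adj : V → V → Prop} {K : Set V} (hbd : (bdry adj K).Nonempty)
    (hconn : connectedIn adj K) {x : V} (hx : x ∈ K) : {y | adj x y}.Nonempty := by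
  obtain ⟨b, hb⟩ := hbd
  have hne : x ≠ b := fun h => hb.1 (h ▸ hx)
  obtain ⟨l, hchain, -⟩ := hconn x (Or.inl hx) b (Or.inr hb) hne
  cases l with
  | nil => exact ⟨b, (List.chain_cons.1 hchain).1⟩
  | cons z l => exact ⟨z, (List.chain_cons.1 hchain).1⟩

lemma nbr_mem_union {adj : V → V → Prop} {K : Set V} {x y : V} (hx : x ∈ K) (h : adj x y) :
    y ∈ K ∪ bdry adj K := by
  by_cases hy : y ∈ K
  · exact Or.inl hy
  · exact Or.inr ⟨hy, x, hx, h⟩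

/-- `lapInf` in terms of sup and inf of neighbouring values. -/
lemma lapInf_eq [Fintype V] {adj : V → V → Prop} (u : V → ℝ) (x : V)
    (hne : {y | adj x y}.Nonempty) :
    lapInf adj u x = sSup (u '' {y | adj x y}) + sInf (u '' {y | adj x y}) - 2 * u x := by
  unfold lapInf
  rw [my_csSup_image_sub (Set.toFinite _) hne u (u x),
    my_csInf_image_sub (Set.toFinite _) hne u (u x)]
  ring

/-- Comparison principle. -/
lemma comparison [Fintype V] (adj : V → V → Prop) (K : Set V)
    (hbd : (bdry adj K).Nonempty) (hconn : connectedIn adj K) (u v : V → ℝ)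
    (hu : ∀ x ∈ K, lapInf adj u x = 0) (hv : ∀ x ∈ K, lapInf adj v x = 0)
    (hb : ∀ x ∈ bdry adj K, u x ≤ v x) : ∀ x ∈ K ∪ bdry adj K, u x ≤ v x := by
  by_contra hcon
  push_neg at hcon
  obtain ⟨x₁, hx₁, hlt⟩ := hcon
  set A := K ∪ bdry adj K with hA
  set w := fun x => u x - v x with hw
  obtain ⟨z, hzA, hzmax⟩ := Set.exists_max_image A w (Set.toFinite A) ⟨x₁, hx₁⟩
  set M := w z with hM
  have hMpos : 0 < M :=
    lt_of_lt_of_le (show (0:ℝ) < w x₁ from sub_pos.2 hlt) (hzmax x₁ hx₁)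
  set S : Set V := {x ∈ A | w x = M} with hS
  obtain ⟨x₀, hx₀S, hx₀max⟩ := Set.exists_max_image S u (Set.toFinite S) ⟨z, hzA, rfl⟩
  -- the key claim
  have key : ∀ x, x ∈ S → u x = u x₀ → x ∈ K ∧ ∀ y, adj x y → (y ∈ S ∧ u y = u x₀) := by
    intro x hxS hxu
    have hxA : x ∈ A := hxS.1
    have hxK : x ∈ K := by
      rcases hxA with h | h
      · exact h
      · exfalso
        have h1 : u x ≤ v x := hb x h
        have h2 : u x - v x = M := hxS.2
        linarith
    have hne : {y | adj x y}.Nonempty := nbr_nonempty hbd hconn hxK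
    have hfin : ({y | adj x y} : Set V).Finite := Set.toFinite _
    set Su := sSup (u '' {y | adj x y}) with hSu
    set Iu := sInf (u '' {y | adj x y}) with hIu
    set Sv := sSup (v '' {y | adj x y}) with hSv
    set Iv := sInf (v '' {y | adj x y}) with hIv
    have hequ : Su + Iu = 2 * u x := by
      have := hu x hxK; rw [lapInf_eq u x hne] at this; linarith
    have heqv : Sv + Iv = 2 * v x := by
      have := hv x hxK; rw [lapInf_eq v x hne] at this; linarith
    have hIuSu : Iu ≤ Su := csInf_le_csSup (hne.image u) (hfin.image u).bddBelow
      (hfin.image u).bddAbove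
    have hIvSv : Iv ≤ Sv := csInf_le_csSup (hne.image v) (hfin.image v).bddBelow
      (hfin.image v).bddAbove
    -- pick maximizer of u and minimizer of v among neighbours
    obtain ⟨yp, hyp, hypu⟩ := (hne.image u).csSup_mem (hfin.image u)
    obtain ⟨ym, hym, hymv⟩ := (hne.image v).csInf_mem (hfin.image v)
    have hypA : yp ∈ A := nbr_mem_union hxK hyp
    have hymA : ym ∈ A := nbr_mem_union hxK hym
    have hwx : w x = M := hxS.2
    have h1 : w yp ≤ w x := by rw [hwx]; exact hzmax yp hypA
    have h2 : w ym ≤ w x := by rw [hwx]; exact hzmax ym hymA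
    have hvyp : v yp ≤ Sv := le_csSup (hfin.image v).bddAbove ⟨yp, hyp, rfl⟩
    have huym : Iu ≤ u ym := csInf_le (hfin.image u).bddBelow ⟨ym, hym, rfl⟩
    -- δu ≤ δv and δv ≤ δu
    have hd1 : Su - u x ≤ Sv - v x := by
      have : u yp - v yp ≤ u x - v x := h1
      rw [hypu] at this; linarith
    have hd2 : Sv - v x ≤ Su - u x := by
      have : u ym - v ym ≤ u x - v x := h2
      rw [hymv] at this; linarith
    have hdeq : Su - u x = Sv - v x := le_antisymm hd1 hd2
    -- yp is also a maximizer of w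
    have hvypeq : v yp = v x + (Su - u x) := by
      have h3 : u yp - v yp ≤ u x - v x := h1
      rw [hypu] at h3; linarith
    have hypS : yp ∈ S := by
      refine ⟨hypA, ?_⟩
      rw [← hwx]; simp only [hw]; rw [hypu, hvypeq]; ring
    have hδ0 : Su - u x = 0 := by
      have := hx₀max yp hypS
      rw [hypu, ← hxu] at this
      have h0 : 0 ≤ Su - u x := by linarith
      linarith
    have hIux : Iu = u x := by linarith
    have hSux : Su = u x := by linarith
    have hIvx : Iv = v x := by linarith
    have hSvx : Sv = v x := by linarith
    refine ⟨hxK, ?_⟩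
    intro y hy
    have huy : u y = u x := le_antisymm
      (hSux ▸ le_csSup (hfin.image u).bddAbove ⟨y, hy, rfl⟩)
      (hIux ▸ csInf_le (hfin.image u).bddBelow ⟨y, hy, rfl⟩)
    have hvy : v y = v x := le_antisymm
      (hSvx ▸ le_csSup (hfin.image v).bddAbove ⟨y, hy, rfl⟩)
      (hIvx ▸ csInf_le (hfin.image v).bddBelow ⟨y, hy, rfl⟩)
    have hyA : y ∈ A := nbr_mem_union hxK hy
    exact ⟨⟨hyA, by simp only [hw]; rw [huy, hvy, ← hwx]⟩, by rw [huy, hxu]⟩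
  -- propagation along a path to the boundary
  obtain ⟨b, hbB⟩ := hbd
  have hbS : b ∈ S := by
    have hx₀K : x₀ ∈ K := (key x₀ hx₀S rfl).1
    have hneq : x₀ ≠ b := fun h => hbB.1 (h ▸ hx₀K)
    obtain ⟨l, hchain, hl⟩ := hconn x₀ (Or.inl hx₀K) b (Or.inr hbB) hneq
    clear hneq hx₀K
    have : ∀ l : List V, ∀ x, x ∈ S → u x = u x₀ →
        List.Chain adj x (l ++ [b]) → (∀ z ∈ l, z ∈ K) → b ∈ S := by
      intro l
      induction l with
      | nil =>
        intro x hxS hxu hch _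
        exact ((key x hxS hxu).2 b (List.chain_cons.1 hch).1).1
      | cons a l ih =>
        intro x hxS hxu hch hmem
        have hadj := (List.chain_cons.1 hch).1
        have ha := (key x hxS hxu).2 a hadj
        exact ih a ha.1 ha.2 (List.chain_cons.1 hch).2 (fun z hz => hmem z (List.mem_cons_of_mem a hz))
    exact this l x₀ hx₀S rfl hchain hl
  have := hb b hbB
  have := hbS.2
  simp only [hw] at this
  linarith

/-- Existence, uniqueness and boundary bounds for the infinity harmonic extension. -/
theorem stmt1 [Fintype V] (adj : V → V → Prop) (hsymm : ∀ x y, adj x y → adj y x)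
    (K : Set V) (hK : K.Nonempty) (hbd : (bdry adj K).Nonempty)
    (hconn : connectedIn adj K) (g : V → ℝ) :
    ∃ u : V → ℝ,
      (∀ x ∈ bdry adj K, u x = g x) ∧
      (∀ x ∈ K, lapInf adj u x = 0) ∧
      (∀ x ∈ K, sInf (g '' bdry adj K) ≤ u x ∧ u x ≤ sSup (g '' bdry adj K)) ∧
      (∀ v : V → ℝ, (∀ x ∈ bdry adj K, v x = g x) → (∀ x ∈ K, lapInf adj v x = 0) →
        ∀ x ∈ K ∪ bdry adj K, v x = u x) := by
  set m := sInf (g '' bdry adj K) with hm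
  set Mx := sSup (g '' bdry adj K) with hMx
  have hgfin : (g '' bdry adj K).Finite := Set.toFinite _
  have hgne : (g '' bdry adj K).Nonempty := hbd.image g
  have hmM : m ≤ Mx := csInf_le_csSup hgne hgfin.bddBelow hgfin.bddAbove
  haveI : Fact (m ≤ Mx) := ⟨hmM⟩
  -- the monotone operator
  set T0 : (V → Set.Icc m Mx) → (V → Set.Icc m Mx) :=
    fun f x => ⟨max m (min Mx (if x ∈ K then
        (sSup ((fun y => (f y : ℝ)) '' {y | adj x y}) +
          sInf ((fun y => (f y : ℝ)) '' {y | adj x y})) / 2 else g x)),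
      le_max_left _ _, max_le hmM (min_le_left _ _)⟩ with hT0
  have hmono : Monotone T0 := by
    intro f f' hff' x
    show max m (min Mx _) ≤ max m (min Mx _)
    refine max_le_max le_rfl (min_le_min le_rfl ?_)
    split_ifs with hx
    · have hne : {y | adj x y}.Nonempty := nbr_nonempty hbd hconn hx
      have hfin : ({y | adj x y} : Set V).Finite := Set.toFinite _
      have h1 : sSup ((fun y => (f y : ℝ)) '' {y | adj x y}) ≤
          sSup ((fun y => (f' y : ℝ)) '' {y | adj x y}) := by
        refine csSup_le (hne.image _) ?_
        rintro b ⟨y, hy, rfl⟩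
        exact le_trans (hff' y) (le_csSup (hfin.image _).bddAbove ⟨y, hy, rfl⟩)
      have h2 : sInf ((fun y => (f y : ℝ)) '' {y | adj x y}) ≤
          sInf ((fun y => (f' y : ℝ)) '' {y | adj x y}) := by
        refine le_csInf (hne.image _) ?_
        rintro b ⟨y, hy, rfl⟩
        exact le_trans (csInf_le (hfin.image _).bddBelow ⟨y, hy, rfl⟩) (hff' y)
      linarith
    · exact le_rfl
  set T : (V → Set.Icc m Mx) →o (V → Set.Icc m Mx) := ⟨T0, hmono⟩ with hT
  set f₀ := T.lfp with hf₀
  have hfix : T f₀ = f₀ := T.map_lfp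
  set u : V → ℝ := fun x => (f₀ x : ℝ) with hu
  have hfixx : ∀ x, u x = max m (min Mx (if x ∈ K then
      (sSup (u '' {y | adj x y}) + sInf (u '' {y | adj x y})) / 2 else g x)) := by
    intro x
    conv_lhs => rw [hu, ← hfix]
    rfl
  -- boundary values
  have hbval : ∀ x ∈ bdry adj K, u x = g x := by
    intro x hx
    have hgm : m ≤ g x := csInf_le hgfin.bddBelow ⟨x, hx, rfl⟩
    have hgM : g x ≤ Mx := le_csSup hgfin.bddAbove ⟨x, hx, rfl⟩
    rw [hfixx x, if_neg hx.1, min_eq_right hgM, max_eq_right hgm]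
  -- values on K
  have hKval : ∀ x ∈ K, u x =
      (sSup (u '' {y | adj x y}) + sInf (u '' {y | adj x y})) / 2 := by
    intro x hx
    have hne : {y | adj x y}.Nonempty := nbr_nonempty hbd hconn hx
    have hfin : ({y | adj x y} : Set V).Finite := Set.toFinite _
    have hSle : sSup (u '' {y | adj x y}) ≤ Mx :=
      csSup_le (hne.image u) (by rintro b ⟨y, hy, rfl⟩; exact (f₀ y).2.2)
    have hIge : m ≤ sInf (u '' {y | adj x y}) :=
      le_csInf (hne.image u) (by rintro b ⟨y, hy, rfl⟩; exact (f₀ y).2.1)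
    have hIS : sInf (u '' {y | adj x y}) ≤ sSup (u '' {y | adj x y}) :=
      csInf_le_csSup (hne.image u) (hfin.image u).bddBelow (hfin.image u).bddAbove
    rw [hfixx x, if_pos hx, min_eq_right (by linarith), max_eq_right (by linarith)]
  have hharm : ∀ x ∈ K, lapInf adj u x = 0 := by
    intro x hx
    have hne : {y | adj x y}.Nonempty := nbr_nonempty hbd hconn hx
    rw [lapInf_eq u x hne, hKval x hx]
    ring
  have hbounds : ∀ x ∈ K, m ≤ u x ∧ u x ≤ Mx := fun x _ => ⟨(f₀ x).2.1, (f₀ x).2.2⟩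
  refine ⟨u, hbval, hharm, hbounds, ?_⟩
  intro v hvb hvh x hx
  have h1 := comparison adj K hbd hconn v u hvh hharm
    (fun y hy => by rw [hvb y hy, hbval y hy]) x hx
  have h2 := comparison adj K hbd hconn u v hharm hvh
    (fun y hy => by rw [hvb y hy, hbval y hy]) x hx
  linarith
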